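/- Let ρ(x,t) = (4π(s−t))^{−(n−1)/2} exp(−|x−y|²/(4(s−t))) for fixed y ∈ ℝⁿ and s > t. Then for any unit vector a ∈ ℝⁿ, the identity (a·∇ρ)²/ρ + (I − a⊗a)·∇²ρ + ∂ₜρ = 0 holds, where ∇ and ∇² are taken in x, and A·B denotes the sum of entrywise products of matrices. -/

import Mathlib

open scoped BigOperators

section Aux

open scoped RealInnerProductSpace

/-- Spatial derivative of the Gaussian. -/
lemma gaussian_hasFDerivAt (n : ℕ) (y z : EuclideanSpace ℝ (Fin n)) (C k : ℝ) :
    HasFDerivAt (fun w : EuclideanSpace ℝ (Fin n) => C * Real.exp (-k * ⟪w - y, w - y⟫))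
      ((C * Real.exp (-k * ⟪z - y, z - y⟫) * (-(2 * k))) • (innerSL ℝ (z - y))) z := by
  have h0 : HasFDerivAt (fun w : EuclideanSpace ℝ (Fin n) => w - y)
      (ContinuousLinearMap.id ℝ _) z := (hasFDerivAt_id z).sub_const y
  have h1 := (h0.inner ℝ h0)
  have h2 : HasFDerivAt (fun w : EuclideanSpace ℝ (Fin n) => ⟪w - y, w - y⟫)
      ((2 : ℝ) • (innerSL ℝ (z - y))) z := by
    refine h1.congr_fderiv ?_
    ext v
    simp [fderivInnerCLM_apply, real_inner_comm, two_smul]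
    rw [← real_inner_comm v (z - y), inner_sub_left]
  have h3 := ((h2.const_mul (-k)).exp.const_mul C)
  refine h3.congr_fderiv ?_
  ext v
  simp [Real.exp_ne_zero]
  ring

/-- Time derivative of the backward heat kernel. -/
lemma gaussian_hasDerivAt_time (s t Q : ℝ) (p : ℝ) (ht : t < s) :
    HasDerivAt (fun τ => (4 * Real.pi * (s - τ)) ^ p * Real.exp (-Q / (4 * (s - τ))))
      ((4 * Real.pi * (s - t)) ^ p * Real.exp (-Q / (4 * (s - t))) *
        (-p / (s - t) - Q / (4 * (s - t) ^ 2))) t := by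
  have hst : 0 < s - t := sub_pos.2 ht
  have hb : 0 < 4 * Real.pi * (s - t) := by positivity
  have h1 : HasDerivAt (fun τ => 4 * Real.pi * (s - τ)) (4 * Real.pi * (-1)) t :=
    ((hasDerivAt_id t).const_sub s).const_mul (4 * Real.pi)
  have h2 := h1.rpow_const (p := p) (Or.inl (ne_of_gt hb))
  have hs : HasDerivAt (fun τ => s - τ) (-1) t := (hasDerivAt_id t).const_sub s
  have hinv := (hs.inv (ne_of_gt hst)).const_mul (-Q / 4)
  have h3 : HasDerivAt (fun τ => -Q / (4 * (s - τ))) (-Q / 4 * (-(-1) / (s - t) ^ 2)) t := by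
    refine hinv.congr_of_eventuallyEq (Filter.Eventually.of_forall fun τ => ?_)
    show -Q / (4 * (s - τ)) = -Q / 4 * (s - τ)⁻¹
    rw [div_mul_eq_div_div, div_eq_mul_inv]
  have h5 := h2.mul h3.exp
  refine h5.congr_deriv ?_
  rw [show p - 1 = p - 1 from rfl, Real.rpow_sub hb, Real.rpow_one]
  field_simp
  ring

end Aux

/- STATEMENT 0: the (n-1)-dimensional backward heat kernel
ρ(x,t) = (4π(s−t))^{−(n−1)/2} exp(−|x−y|²/(4(s−t))) satisfies, for any unit vector a,
(a·∇ρ)²/ρ + (I − a⊗a)·∇²ρ + ∂ₜρ = 0. -/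
theorem backward_heat_kernel_identity
    (n : ℕ) (hn : 2 ≤ n) (y : EuclideanSpace ℝ (Fin n)) (s : ℝ)
    (ρ : EuclideanSpace ℝ (Fin n) → ℝ → ℝ)
    (hρ : ∀ x t, ρ x t =
      (4 * Real.pi * (s - t)) ^ (-(((n : ℝ) - 1) / 2)) *
        Real.exp (-‖x - y‖ ^ 2 / (4 * (s - t))))
    (x : EuclideanSpace ℝ (Fin n)) (t : ℝ) (ht : t < s)
    (a : EuclideanSpace ℝ (Fin n)) (ha : ‖a‖ = 1) :
    (fderiv ℝ (fun z => ρ z t) x a) ^ 2 / ρ x t +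
      (∑ i : Fin n, ∑ j : Fin n,
        ((if i = j then (1 : ℝ) else 0) - a i * a j) *
          fderiv ℝ (fun z => fderiv ℝ (fun w => ρ w t) z (EuclideanSpace.single j 1)) x
            (EuclideanSpace.single i 1)) +
      deriv (fun τ => ρ x τ) t = 0 := by
  classical
  have hst : 0 < s - t := sub_pos.2 ht
  set p : ℝ := -(((n : ℝ) - 1) / 2) with hp
  set k : ℝ := (4 * (s - t))⁻¹ with hkdef
  have hk4 : (0 : ℝ) < 4 * (s - t) := by linarith
  set C : ℝ := (4 * Real.pi * (s - t)) ^ p with hC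
  have hCpos : 0 < C := Real.rpow_pos_of_pos (by positivity) p
  -- the kernel at fixed time t as a clean function
  set f : EuclideanSpace ℝ (Fin n) → ℝ :=
    fun z => C * Real.exp (-k * (inner ℝ (z - y) (z - y) : ℝ)) with hf
  have hfun : (fun z => ρ z t) = f := by
    funext z
    rw [hρ z t, hf]
    congr 1
    rw [real_inner_self_eq_norm_sq, hkdef]
    field_simp
  have hfx : ρ x t = f x := congrFun hfun x
  have hfpos : 0 < f x := by positivity
  -- gradient
  have hDf : ∀ z, HasFDerivAt f ((f z * (-(2 * k))) • innerSL ℝ (z - y)) z :=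
    fun z => gaussian_hasFDerivAt n y z C k
  have hgrad : ∀ z v, fderiv ℝ (fun w => ρ w t) z v
      = f z * (-(2 * k)) * (inner ℝ (z - y) v : ℝ) := by
    intro z v
    rw [hfun, (hDf z).fderiv]
    simp only [ContinuousLinearMap.smul_apply, innerSL_apply_apply, smul_eq_mul]
  -- second derivatives
  have hsec : ∀ i j : Fin n,
      fderiv ℝ (fun z => fderiv ℝ (fun w => ρ w t) z (EuclideanSpace.single j 1)) x
        (EuclideanSpace.single i 1)
      = f x * (2 * k) ^ 2 * ((x i - y i) * (x j - y j))
        - f x * (2 * k) * (if i = j then 1 else 0) := by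
    intro i j
    have hrw : (fun z => fderiv ℝ (fun w => ρ w t) z (EuclideanSpace.single j 1))
        = fun z => (f z * (-(2 * k))) * (z j - y j) := by
      funext z
      rw [hgrad]
      have : (inner ℝ (z - y) (EuclideanSpace.single j (1 : ℝ)) : ℝ) = z j - y j := by
        rw [EuclideanSpace.inner_single_right]
        simp [PiLp.sub_apply]
      rw [this]
    rw [hrw]
    have hA : HasFDerivAt (fun z : EuclideanSpace ℝ (Fin n) => f z * (-(2 * k)))
        ((-(2 * k)) • ((f x * (-(2 * k))) • innerSL ℝ (x - y))) x := by
      simpa [smul_smul, mul_comm] using (hDf x).mul_const (-(2 * k))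
    have hB : HasFDerivAt (fun z : EuclideanSpace ℝ (Fin n) => z j - y j)
        ((EuclideanSpace.proj j : EuclideanSpace ℝ (Fin n) →L[ℝ] ℝ)) x := by
      exact ((EuclideanSpace.proj j :
        EuclideanSpace ℝ (Fin n) →L[ℝ] ℝ).hasFDerivAt).sub_const (y j)
    have hAB : HasFDerivAt (fun z : EuclideanSpace ℝ (Fin n) => f z * (-(2 * k)) * (z j - y j)) _ x :=
      hA.mul hB
    rw [hAB.fderiv]
    have hinner : (inner ℝ (x - y) (EuclideanSpace.single i (1 : ℝ)) : ℝ) = x i - y i := by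
      rw [EuclideanSpace.inner_single_right]
      simp [PiLp.sub_apply]
    have hproj : (EuclideanSpace.proj j : EuclideanSpace ℝ (Fin n) →L[ℝ] ℝ)
        (EuclideanSpace.single i (1 : ℝ)) = if i = j then 1 else 0 := by
      simp [PiLp.proj_apply, EuclideanSpace.single_apply, eq_comm]
    simp only [ContinuousLinearMap.add_apply, ContinuousLinearMap.smul_apply,
      innerSL_apply_apply, hinner, hproj, smul_eq_mul]
    ring
  -- time derivative
  have hQdef : (fun τ => ρ x τ) = fun τ =>
      (4 * Real.pi * (s - τ)) ^ p * Real.exp (-‖x - y‖ ^ 2 / (4 * (s - τ))) := by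
    funext τ; rw [hρ x τ]
  have hTime : deriv (fun τ => ρ x τ) t
      = f x * (-p / (s - t) - ‖x - y‖ ^ 2 / (4 * (s - t) ^ 2)) := by
    rw [hQdef, (gaussian_hasDerivAt_time s t (‖x - y‖ ^ 2) p ht).deriv]
    congr 1
    rw [hf]
    congr 2
    rw [real_inner_self_eq_norm_sq, hkdef]
    field_simp
  -- scalar abbreviations
  set r : ℝ := f x with hr
  set u : Fin n → ℝ := fun i => x i - y i with hu
  have hP : (inner ℝ (x - y) a : ℝ) = ∑ i, u i * a i := by
    simp [PiLp.inner_apply, RCLike.inner_apply, PiLp.sub_apply, hu]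
    exact Finset.sum_congr rfl fun i _ => mul_comm _ _
  have hQ : ‖x - y‖ ^ 2 = ∑ i, u i * u i := by
    rw [← real_inner_self_eq_norm_sq]
    simp only [PiLp.inner_apply, RCLike.inner_apply, PiLp.sub_apply, hu, conj_trivial]
  have hone : (∑ i, a i * a i) = 1 := by
    have h' : (inner ℝ a a : ℝ) = 1 := by
      rw [real_inner_self_eq_norm_sq, ha]; norm_num
    rw [← h']
    simp only [PiLp.inner_apply, RCLike.inner_apply, conj_trivial]
  -- first term
  have hT1 : (fderiv ℝ (fun z => ρ z t) x a) ^ 2 / ρ x t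
      = r * ((2 * k) ^ 2 * (∑ i, u i * a i) ^ 2) := by
    rw [hgrad x a, hP, hfx]
    field_simp
    ring
  -- double sum
  have hsum : (∑ i : Fin n, ∑ j : Fin n,
      ((if i = j then (1 : ℝ) else 0) - a i * a j) *
        fderiv ℝ (fun z => fderiv ℝ (fun w => ρ w t) z (EuclideanSpace.single j 1)) x
          (EuclideanSpace.single i 1))
      = r * (2 * k) ^ 2 * (∑ i, u i * u i) - (n : ℝ) * (r * (2 * k))
        + r * (2 * k) - (∑ i, u i * a i) ^ 2 * (r * (2 * k) ^ 2) := by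
    have expand : ∀ i j : Fin n,
        ((if i = j then (1 : ℝ) else 0) - a i * a j) *
          fderiv ℝ (fun z => fderiv ℝ (fun w => ρ w t) z (EuclideanSpace.single j 1)) x
            (EuclideanSpace.single i 1)
        = (if i = j then r * (2 * k) ^ 2 * (u i * u i) - r * (2 * k)
              + a i * a j * (r * (2 * k)) else 0)
          - (a i * u i) * (a j * u j) * (r * (2 * k) ^ 2) := by
      intro i j
      rw [hsec i j]
      by_cases h : i = j
      · subst h; simp [hu]; ring
      · simp [h, hu]; ring
    calc (∑ i : Fin n, ∑ j : Fin n,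
        ((if i = j then (1 : ℝ) else 0) - a i * a j) *
          fderiv ℝ (fun z => fderiv ℝ (fun w => ρ w t) z (EuclideanSpace.single j 1)) x
            (EuclideanSpace.single i 1))
        = ∑ i : Fin n, ((r * (2 * k) ^ 2 * (u i * u i) - r * (2 * k)
              + a i * a i * (r * (2 * k)))
            - (a i * u i) * (∑ j, a j * u j) * (r * (2 * k) ^ 2)) := by
          refine Finset.sum_congr rfl fun i _ => ?_
          rw [Finset.sum_congr rfl fun j _ => expand i j, Finset.sum_sub_distrib]
          congr 1
          · simp
          · rw [← Finset.sum_mul, ← Finset.mul_sum]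
      _ = _ := by
          rw [Finset.sum_sub_distrib]
          simp only [← Finset.sum_mul, Finset.sum_add_distrib, Finset.sum_sub_distrib,
            Finset.sum_const, Finset.card_univ, Fintype.card_fin, nsmul_eq_mul,
            ← Finset.mul_sum]
          have : (∑ i, a i * u i) = ∑ i, u i * a i :=
            Finset.sum_congr rfl fun i _ => mul_comm _ _
          rw [this, hone]
          ring
  rw [hT1, hsum, hTime, hQ]
  have hst' : (s - t) ≠ 0 := ne_of_gt hst
  rw [hp, hkdef]
  field_simp
  ring
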